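/- Let M ⊆ ℝⁿ be a convex polytope (intersection of finitely many closed half-spaces, assumed compact) and γ : [0,r) → M a C¹-map with r > 0. Then there exists ε > 0 such that γ(0) + t·γ'(0) ∈ M for all t ∈ [0, ε]. -/

import Mathlib

open Set

/-- Let `M ⊆ ℝⁿ` be a convex polytope (a compact intersection of
finitely many closed half-spaces) and `γ : [0,r) → M` a `C¹`-map with `r > 0`.
Then there is `ε > 0` with `γ(0) + t • γ'(0) ∈ M` for all `t ∈ [0, ε]`. -/
theorem derivative_points_into_polytope {n : ℕ}
    (Λ : Finset ((Fin n → ℝ) →ₗ[ℝ] ℝ)) (a : ((Fin n → ℝ) →ₗ[ℝ] ℝ) → ℝ)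
    (M : Set (Fin n → ℝ)) (hM : M = {x | ∀ l ∈ Λ, l x ≤ a l}) (hMc : IsCompact M)
    (r : ℝ) (hr : 0 < r) (γ γ' : ℝ → (Fin n → ℝ))
    (hmaps : ∀ t ∈ Ico (0 : ℝ) r, γ t ∈ M)
    (hderiv : ∀ t ∈ Ico (0 : ℝ) r, HasDerivWithinAt γ (γ' t) (Ico 0 r) t)
    (hcont : ContinuousOn γ' (Ico 0 r)) :
    ∃ ε > (0 : ℝ), ∀ t ∈ Icc (0 : ℝ) ε, γ 0 + t • γ' 0 ∈ M := by
  have h0 : (0 : ℝ) ∈ Ico (0 : ℝ) r := ⟨le_refl 0, hr⟩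
  have hγ0 : γ 0 ∈ M := hmaps 0 h0
  -- Key claim: for each l ∈ Λ, eventually on [0,∞) we have l (γ 0) + t * l (γ' 0) ≤ a l
  have key : ∀ l ∈ Λ, ∀ᶠ t in nhdsWithin (0 : ℝ) (Ici 0),
      l (γ 0) + t * l (γ' 0) ≤ a l := by
    intro l hl
    have hle : l (γ 0) ≤ a l := by
      rw [hM] at hγ0; exact hγ0 l hl
    rcases lt_or_eq_of_le hle with hlt | heq
    · -- strict slack: continuity in t
      have hcontf : Continuous fun t : ℝ => l (γ 0) + t * l (γ' 0) := by continuity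
      have : ∀ᶠ t in nhds (0 : ℝ), l (γ 0) + t * l (γ' 0) < a l := by
        have := hcontf.continuousAt (x := (0 : ℝ))
        have h0v : l (γ 0) + (0 : ℝ) * l (γ' 0) < a l := by simpa using hlt
        exact this.eventually_lt continuousAt_const h0v
      exact (this.filter_mono nhdsWithin_le_nhds).mono fun t ht => ht.le
    · -- active constraint: one-sided derivative is ≤ 0
      set L := LinearMap.toContinuousLinearMap l with hL
      have hderiv0 : HasDerivWithinAt (fun t => L (γ t)) (L (γ' 0)) (Ico 0 r) 0 :=
        L.hasFDerivAt.comp_hasDerivWithinAt 0 (hderiv 0 h0)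
      have hneb : (nhdsWithin (0 : ℝ) (Ico 0 r \ {0})).NeBot := by
        have : Ico (0 : ℝ) r \ {0} = Ioo 0 r := by
          ext t
          simp only [mem_diff, mem_Ico, mem_Ioo, mem_singleton_iff]
          constructor
          · rintro ⟨⟨h1, h2⟩, h3⟩; exact ⟨lt_of_le_of_ne h1 (Ne.symm h3), h2⟩
          · rintro ⟨h1, h2⟩; exact ⟨⟨h1.le, h2⟩, h1.ne'⟩
        rw [this]
        refine mem_closure_iff_nhdsWithin_neBot.mp ?_
        rw [closure_Ioo hr.ne]
        exact ⟨le_refl 0, hr.le⟩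
      have hslope : Filter.Tendsto (slope (fun t => L (γ t)) 0)
          (nhdsWithin 0 (Ico 0 r \ {0})) (nhds (L (γ' 0))) :=
        hasDerivWithinAt_iff_tendsto_slope.mp hderiv0
      have hnonpos : L (γ' 0) ≤ 0 := by
        refine le_of_tendsto hslope ?_
        filter_upwards [eventually_mem_nhdsWithin] with t ht
        obtain ⟨⟨ht0, htr⟩, htne⟩ := ht
        have htpos : 0 < t := lt_of_le_of_ne ht0 (Ne.symm htne)
        have hval : L (γ t) ≤ L (γ 0) := by
          have := hmaps t ⟨ht0, htr⟩
          rw [hM] at this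
          calc L (γ t) = l (γ t) := rfl
            _ ≤ a l := this l hl
            _ = l (γ 0) := heq.symm
            _ = L (γ 0) := rfl
        rw [slope_def_field]
        simp only [sub_zero]
        exact div_nonpos_of_nonpos_of_nonneg (by linarith) htpos.le
      filter_upwards [eventually_mem_nhdsWithin] with t ht
      have : t * l (γ' 0) ≤ 0 :=
        mul_nonpos_of_nonneg_of_nonpos ht hnonpos
      linarith [heq.le, this]
  -- combine finitely many eventual statements
  have hall : ∀ᶠ t in nhdsWithin (0 : ℝ) (Ici 0),
      ∀ l ∈ Λ, l (γ 0) + t * l (γ' 0) ≤ a l := by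
    rw [Filter.eventually_all_finset]
    exact key
  rcases mem_nhdsGE_iff_exists_Icc_subset.mp hall with ⟨ε, hε, hsub⟩
  refine ⟨ε, hε, fun t ht => ?_⟩
  have := hsub ht
  rw [hM]
  intro l hl
  have h := this l hl
  simpa [map_add, map_smul, smul_eq_mul] using h
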